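/- Let 𝒳, 𝒜 be nonempty finite types, α ∈ (0,1) ∪ (1,∞), p_X a probability mass function on 𝒳 that is not identically zero, and p a strictly positive channel from 𝒳 to 𝒜. Then the minimum over strictly positive probability mass functions q on 𝒜 of the Rényi divergence D_α(p_X p ‖ p_X q) = (1/(α−1)) log Σ_{x,a} p_X(x) p(a|x)^α q(a)^{1−α} is attained at q*(a) = (Σ_x p_X(x) p(a|x)^α)^{1/α} / Σ_{a'} (Σ_x p_X(x) p(a'|x)^α)^{1/α}, and the minimum value equals Sibson's mutual information of order α: (α/(α−1)) log Σ_a (Σ_x p_X(x) p(a|x)^α)^{1/α}. -/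

import Mathlib

open Finset Real

/-- A probability mass function on a finite type. -/
def IsPMF {Z : Type*} [Fintype Z] (p : Z → ℝ) : Prop :=
  (∀ z, 0 ≤ p z) ∧ ∑ z, p z = 1

/-- A channel from `X` to `A`: a family of pmfs on `A` indexed by `X`. -/
def IsChannel {X A : Type*} [Fintype X] [Fintype A] (W : X → A → ℝ) : Prop :=
  ∀ x, IsPMF (W x)

/-- Expected loss `Σ_{x,a} p_X(x) p_{A|X}(a|x) ℓ(x,a)`. -/
noncomputable def expLoss {X A : Type*} [Fintype X] [Fintype A]
    (pX : X → ℝ) (ℓ : X → A → ℝ) (W : X → A → ℝ) : ℝ :=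
  ∑ x, ∑ a, pX x * W x a * ℓ x a

theorem sibson_identity
    {X A : Type*} [Fintype X] [Fintype A] [Nonempty X] [Nonempty A]
    (α : ℝ) (hα : α ∈ Set.Ioo (0 : ℝ) 1 ∪ Set.Ioi (1 : ℝ))
    (pX : X → ℝ) (hpX : IsPMF pX) (hpXne : ∃ x, pX x ≠ 0)
    (p : X → A → ℝ) (hp : IsChannel p) (hppos : ∀ x a, 0 < p x a) :
    letI D : (A → ℝ) → ℝ := fun q =>
      (1 / (α - 1)) * Real.log (∑ x, ∑ a, pX x * p x a ^ α * q a ^ (1 - α))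
    letI qstar : A → ℝ := fun a =>
      (∑ x, pX x * p x a ^ α) ^ (1 / α) / ∑ a', (∑ x, pX x * p x a' ^ α) ^ (1 / α)
    (IsPMF qstar ∧ (∀ a, 0 < qstar a)) ∧
      (∀ q : A → ℝ, IsPMF q → (∀ a, 0 < q a) → D qstar ≤ D q) ∧
      D qstar = (α / (α - 1)) * Real.log (∑ a, (∑ x, pX x * p x a ^ α) ^ (1 / α)) := by
  have hα0 : 0 < α := by
    rcases hα with ⟨h1, _⟩ | h
    · exact h1
    · exact lt_trans one_pos h
  have hαne : α ≠ 1 := by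
    rcases hα with ⟨_, h2⟩ | h
    · exact ne_of_lt h2
    · exact ne_of_gt h
  set qstar : A → ℝ := fun a =>
      (∑ x, pX x * p x a ^ α) ^ (1 / α) / ∑ a', (∑ x, pX x * p x a' ^ α) ^ (1 / α)
    with hqsdef
  set D : (A → ℝ) → ℝ := fun q =>
      (1 / (α - 1)) * Real.log (∑ x, ∑ a, pX x * p x a ^ α * q a ^ (1 - α))
    with hDdef
  set f : A → ℝ := fun a => ∑ x, pX x * p x a ^ α with hf
  have hfpos : ∀ a, 0 < f a := by
    intro a
    obtain ⟨x0, hx0⟩ := hpXne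
    have hx0' : 0 < pX x0 := lt_of_le_of_ne (hpX.1 x0) (Ne.symm hx0)
    exact Finset.sum_pos'
      (fun x _ => mul_nonneg (hpX.1 x) (Real.rpow_nonneg (hppos x a).le α))
      ⟨x0, Finset.mem_univ x0, mul_pos hx0' (Real.rpow_pos_of_pos (hppos x0 a) α)⟩
  set S : ℝ := ∑ a, f a ^ (1 / α) with hS
  have hSpos : 0 < S :=
    Finset.sum_pos (fun a _ => Real.rpow_pos_of_pos (hfpos a) _) Finset.univ_nonempty
  have hqstar : ∀ a, qstar a = f a ^ (1 / α) / S := fun a => rfl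
  have hqstarpos : ∀ a, 0 < qstar a := fun a =>
    div_pos (Real.rpow_pos_of_pos (hfpos a) _) hSpos
  have hqstarpmf : IsPMF qstar := by
    refine ⟨fun a => (hqstarpos a).le, ?_⟩
    rw [show (∑ a, qstar a) = (∑ a, f a ^ (1/α)) / S from (Finset.sum_div _ _ _).symm]
    exact div_self hSpos.ne'
  have hDeq : ∀ q : A → ℝ,
      (∑ x, ∑ a, pX x * p x a ^ α * q a ^ (1 - α)) = ∑ a, f a * q a ^ (1 - α) := by
    intro q
    rw [Finset.sum_comm]
    exact Finset.sum_congr rfl fun a _ => by rw [hf, Finset.sum_mul]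
  -- value at qstar
  have hkey : (∑ a, f a * qstar a ^ (1 - α)) = S ^ α := by
    have h1 : ∀ a, f a * qstar a ^ (1 - α) = f a ^ (1/α) * S ^ (α - 1) := by
      intro a
      have hfa := (hfpos a).le
      rw [hqstar, Real.div_rpow (Real.rpow_nonneg hfa _) hSpos.le,
        ← Real.rpow_mul hfa, div_eq_mul_inv, ← Real.rpow_neg hSpos.le,
        show -(1-α) = α - 1 by ring, ← mul_assoc]
      nth_rewrite 1 [← Real.rpow_one (f a)]
      rw [← Real.rpow_add (hfpos a),
        show (1:ℝ) + 1/α * (1-α) = 1/α by field_simp; ring]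
    rw [Finset.sum_congr rfl fun a _ => h1 a, ← Finset.sum_mul, ← hS]
    nth_rewrite 1 [← Real.rpow_one S]
    rw [← Real.rpow_add hSpos]
    norm_num
  have hDstar : D qstar = (α / (α-1)) * Real.log S := by
    show (1/(α-1)) * Real.log (∑ x, ∑ a, pX x * p x a ^ α * qstar a ^ (1-α)) = _
    rw [hDeq, hkey, Real.log_rpow hSpos]
    ring
  refine ⟨⟨hqstarpmf, hqstarpos⟩, ?_, hDstar⟩
  intro q hq hqpos
  set g : A → ℝ := fun a => f a ^ (1/α) / q a with hg
  have hgpos : ∀ a, 0 < g a := fun a =>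
    div_pos (Real.rpow_pos_of_pos (hfpos a) _) (hqpos a)
  have hsum1 : (∑ a, q a * g a) = S := by
    refine Finset.sum_congr rfl fun a _ => ?_
    rw [hg, mul_comm, div_mul_cancel₀ _ (hqpos a).ne']
  have hsum2 : ∀ a, q a * g a ^ α = f a * q a ^ (1 - α) := by
    intro a
    have hfa := (hfpos a).le
    rw [hg, Real.div_rpow (Real.rpow_nonneg hfa _) (hqpos a).le,
      ← Real.rpow_mul hfa, one_div_mul_cancel hα0.ne', Real.rpow_one,
      Real.rpow_sub (hqpos a), Real.rpow_one]
    have hqa : q a ^ α ≠ 0 := (Real.rpow_pos_of_pos (hqpos a) α).ne'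
    field_simp
  set T : ℝ := ∑ a, f a * q a ^ (1 - α) with hT
  have hTpos : 0 < T :=
    Finset.sum_pos (fun a _ => mul_pos (hfpos a)
      (Real.rpow_pos_of_pos (hqpos a) _)) Finset.univ_nonempty
  have hTsum : (∑ a, q a * g a ^ α) = T :=
    Finset.sum_congr rfl fun a _ => hsum2 a
  have hDq : D q = (1/(α-1)) * Real.log T := by
    show (1/(α-1)) * Real.log (∑ x, ∑ a, pX x * p x a ^ α * q a ^ (1-α)) = _
    rw [hDeq]
  rw [hDstar, hDq, show (α/(α-1)) * Real.log S = (1/(α-1)) * Real.log (S ^ α) by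
    rw [Real.log_rpow hSpos]; ring]
  rcases hα with ⟨_, hα1⟩ | hα1
  · -- 0 < α < 1 : T ≤ S ^ α, and 1/(α-1) < 0
    have hp1 : (1:ℝ) ≤ 1/α := by
      rw [le_div_iff₀ hα0, one_mul]; exact hα1.le
    have hjen := Real.rpow_arith_mean_le_arith_mean_rpow (p := 1/α) Finset.univ q
      (fun a => g a ^ α) (fun a _ => hq.1 a) hq.2
      (fun a _ => Real.rpow_nonneg (hgpos a).le α) hp1
    have hz : ∀ a, (g a ^ α) ^ (1/α : ℝ) = g a := by
      intro a
      rw [← Real.rpow_mul (hgpos a).le, mul_one_div_cancel hα0.ne', Real.rpow_one]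
    rw [hTsum] at hjen
    have hjen' : T ^ (1/α : ℝ) ≤ S := by
      calc T ^ (1/α : ℝ) ≤ ∑ a, q a * (g a ^ α) ^ (1/α : ℝ) := hjen
        _ = ∑ a, q a * g a := Finset.sum_congr rfl fun a _ => by rw [hz a]
        _ = S := hsum1
    have hTS : T ≤ S ^ α := by
      have : (T ^ (1/α : ℝ)) ^ α ≤ S ^ α :=
        Real.rpow_le_rpow (Real.rpow_nonneg hTpos.le _) hjen' hα0.le
      rwa [← Real.rpow_mul hTpos.le, one_div_mul_cancel hα0.ne', Real.rpow_one] at this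
    have hlog : Real.log T ≤ Real.log (S ^ α) := Real.log_le_log hTpos hTS
    have hneg : (1/(α-1) : ℝ) ≤ 0 := by
      apply div_nonpos_of_nonneg_of_nonpos <;> linarith
    exact mul_le_mul_of_nonpos_left hlog hneg
  · -- α > 1 : S ^ α ≤ T, and 1/(α-1) > 0
    have hjen := Real.rpow_arith_mean_le_arith_mean_rpow Finset.univ q g
      (fun a _ => hq.1 a) hq.2 (fun a _ => (hgpos a).le) (Set.mem_Ioi.mp hα1).le
    rw [hsum1, hTsum] at hjen
    have hlog : Real.log (S ^ α) ≤ Real.log T :=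
      Real.log_le_log (Real.rpow_pos_of_pos hSpos α) hjen
    have hα1' : 1 < α := Set.mem_Ioi.mp hα1
    have hpos : (0:ℝ) ≤ 1/(α-1) := div_nonneg one_pos.le (by linarith)
    exact mul_le_mul_of_nonneg_left hlog hpos
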